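/- Let Γ ⊂ ℝⁿ be a rational lattice, i.e., a free ℤ-module of rank n spanning ℝⁿ such that ⟨γ,γ'⟩ ∈ ℚ for all γ, γ' ∈ Γ. Then every coincidence isometry of Γ is a product of at most n reflections ρ_γ with γ ∈ Γ \ {0}, each of which is itself a coincidence isometry of Γ. -/

import Mathlib

open Matrix

/-- Two additive subgroups of `ℝⁿ` are commensurate if their intersection has
finite index in both. -/
def Commensurate {n : ℕ} (Γ Γ' : AddSubgroup (Fin n → ℝ)) : Prop :=
  (Γ'.addSubgroupOf Γ).index ≠ 0 ∧ (Γ.addSubgroupOf Γ').index ≠ 0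

/-- The matrix of the reflection `ρ_γ : x ↦ x - 2(⟨x,γ⟩/⟨γ,γ⟩)γ` along `γ`. -/
noncomputable def reflMatrix {n : ℕ} (γ : Fin n → ℝ) : Matrix (Fin n) (Fin n) ℝ :=
  1 - (2 / dotProduct γ γ) • Matrix.vecMulVec γ γ

/-- `Q` (acting on `ℝⁿ` by `x ↦ Q.mulVec x`) is a coincidence isometry of `Γ`:
it is orthogonal and `Γ` is commensurate with its image `Q(Γ)`. -/
def IsCoincidenceIsometry {n : ℕ} (Γ : AddSubgroup (Fin n → ℝ))
    (Q : Matrix (Fin n) (Fin n) ℝ) : Prop :=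
  Q ∈ Matrix.orthogonalGroup (Fin n) ℝ ∧
    Commensurate Γ (Γ.map Q.mulVecLin.toAddMonoidHom)

/-- `Q` is a product of at most `n` reflections along non-zero elements of `Γ`. -/
def IsProdOfAtMostNCoincReflections {n : ℕ} (Γ : AddSubgroup (Fin n → ℝ))
    (Q : Matrix (Fin n) (Fin n) ℝ) : Prop :=
  ∃ k : ℕ, k ≤ n ∧ ∃ g : Fin k → (Fin n → ℝ), (∀ i, g i ∈ Γ ∧ g i ≠ 0) ∧
    Q = (List.ofFn fun i => reflMatrix (g i)).prod

/-- `b` is an `S`-basis of `Γ` which is also an `ℝ`-basis of `ℝⁿ`; i.e. `Γ` is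
a free `S`-module of rank `n` spanning `ℝⁿ` with basis `b`. -/
def IsSBasisOf {n : ℕ} (S : Subring ℝ) (b : Fin n → (Fin n → ℝ))
    (Γ : AddSubgroup (Fin n → ℝ)) : Prop :=
  LinearIndependent ℝ b ∧ Submodule.span ℝ (Set.range b) = ⊤ ∧
    ∀ x, x ∈ Γ ↔ ∃ c : Fin n → ℝ, (∀ i, c i ∈ S) ∧ x = ∑ i, c i • b i

variable {n : ℕ}

lemma vecMulVec_mulVec' (v w x : Fin n → ℝ) : (vecMulVec v w).mulVec x = (w ⬝ᵥ x) • v := by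
  ext i
  simp only [vecMulVec, mulVec, dotProduct, of_apply, Pi.smul_apply, smul_eq_mul, Finset.sum_mul]
  exact Finset.sum_congr rfl fun j _ => by ring

lemma reflMatrix_mulVec (γ x : Fin n → ℝ) :
    (reflMatrix γ).mulVec x = x - ((2 / (γ ⬝ᵥ γ)) * (γ ⬝ᵥ x)) • γ := by
  unfold reflMatrix
  rw [sub_mulVec, one_mulVec, smul_mulVec, vecMulVec_mulVec', smul_smul]

lemma dot_ne_zero {γ : Fin n → ℝ} (h : γ ≠ 0) : γ ⬝ᵥ γ ≠ 0 :=
  fun hc => h (dotProduct_self_eq_zero.mp hc)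

lemma reflMatrix_mulVec_self {γ : Fin n → ℝ} (h : γ ≠ 0) :
    (reflMatrix γ).mulVec γ = -γ := by
  rw [reflMatrix_mulVec]
  have := dot_ne_zero h
  rw [div_mul_cancel₀ _ this]  -- (2/(d)) * d = 2
  module

lemma reflMatrix_involutive {γ : Fin n → ℝ} (h : γ ≠ 0) (x : Fin n → ℝ) :
    (reflMatrix γ).mulVec ((reflMatrix γ).mulVec x) = x := by
  have hd := dot_ne_zero h
  rw [reflMatrix_mulVec, reflMatrix_mulVec]
  rw [dotProduct_sub, dotProduct_smul]
  field_simp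
  match_scalars <;> field_simp <;> ring_nf <;> simp [hd]

lemma reflMatrix_transpose (γ : Fin n → ℝ) : (reflMatrix γ)ᵀ = reflMatrix γ := by
  unfold reflMatrix
  rw [transpose_sub, transpose_one, transpose_smul]
  congr 1
  ext i j
  simp [vecMulVec, mul_comm]

lemma matrix_ext_mulVec {A B : Matrix (Fin n) (Fin n) ℝ}
    (h : ∀ x, A.mulVec x = B.mulVec x) : A = B := by
  ext i j
  have := congrFun (h (Pi.single j 1)) i
  simpa [mulVec_single] using this

lemma reflMatrix_mul_self {γ : Fin n → ℝ} (h : γ ≠ 0) :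
    reflMatrix γ * reflMatrix γ = 1 := by
  apply matrix_ext_mulVec
  intro x
  rw [← mulVec_mulVec, reflMatrix_involutive h, one_mulVec]

lemma reflMatrix_mem_O {γ : Fin n → ℝ} (h : γ ≠ 0) :
    reflMatrix γ ∈ Matrix.orthogonalGroup (Fin n) ℝ := by
  rw [Matrix.mem_orthogonalGroup_iff]
  show reflMatrix γ * (reflMatrix γ)ᴴ = 1
  rw [conjTranspose_eq_transpose_of_trivial, reflMatrix_transpose, reflMatrix_mul_self h]

lemma orth_dot {Q : Matrix (Fin n) (Fin n) ℝ} (hQ : Q ∈ Matrix.orthogonalGroup (Fin n) ℝ)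
    (x y : Fin n → ℝ) : (Q *ᵥ x) ⬝ᵥ (Q *ᵥ y) = x ⬝ᵥ y := by
  have h1 : Qᵀ * Q = 1 := by
    have := Matrix.mem_orthogonalGroup_iff' (Fin n) ℝ |>.mp hQ
    simpa [Matrix.star_eq_conjTranspose, conjTranspose_eq_transpose_of_trivial] using this
  rw [Matrix.dotProduct_mulVec, ← Matrix.mulVec_transpose, Matrix.mulVec_mulVec, h1, one_mulVec]

lemma coeff_unique {c : Fin n → (Fin n → ℝ)} (hc : LinearIndependent ℝ c) {k k' : Fin n → ℤ}
    (h : ∑ i, (k i : ℝ) • c i = ∑ i, (k' i : ℝ) • c i) : k = k' := by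
  have h2 : ∑ i, ((k i : ℝ) - (k' i : ℝ)) • c i = 0 := by
    simp only [sub_smul, Finset.sum_sub_distrib, h, sub_self]
  have := Fintype.linearIndependent_iff.mp hc _ h2
  funext i
  have := this i
  have : (k i : ℝ) = (k' i : ℝ) := by linarith [sub_eq_zero.mp this]
  exact_mod_cast this

lemma index_ne_zero_of_nsmul_le {Λ H : AddSubgroup (Fin n → ℝ)} {c : Fin n → (Fin n → ℝ)}
    (hc : LinearIndependent ℝ c) (hΛ : ∀ x, x ∈ Λ ↔ ∃ k : Fin n → ℤ, x = ∑ i, (k i : ℝ) • c i)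
    {N : ℕ} (hN : N ≠ 0) (hmul : ∀ x ∈ Λ, (N : ℝ) • x ∈ H) :
    (H.addSubgroupOf Λ).index ≠ 0 := by
  haveI : NeZero N := ⟨hN⟩
  -- coefficient function
  have coeff : ∀ x : Λ, ∃ k : Fin n → ℤ, (x : Fin n → ℝ) = ∑ i, (k i : ℝ) • c i :=
    fun x => (hΛ x).mp x.2
  choose K hK using coeff
  have Kadd : ∀ x y : Λ, K (x + y) = K x + K y := by
    intro x y
    apply coeff_unique hc
    push_cast [Pi.add_apply, add_smul, Finset.sum_add_distrib]
    rw [← hK (x + y), ← hK x, ← hK y]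
    rfl
  let f : Λ →+ (Fin n → ZMod N) :=
    { toFun := fun x i => ((K x i : ℤ) : ZMod N)
      map_zero' := by
        have h0 : K 0 = 0 := by
          apply coeff_unique hc
          rw [← hK 0]
          simp
        funext i; simp [h0]
      map_add' := by
        intro x y
        funext i
        simp [Kadd x y] }
  have hker : f.ker ≤ H.addSubgroupOf Λ := by
    intro x hx
    have hx' : ∀ i, ((K x i : ℤ) : ZMod N) = 0 := fun i => congrFun hx i
    have hdvd : ∀ i, (N : ℤ) ∣ K x i := fun i =>
      (ZMod.intCast_zmod_eq_zero_iff_dvd _ N).mp (hx' i)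
    choose m hm using hdvd
    have hy : (∑ i, (m i : ℝ) • c i) ∈ Λ := (hΛ _).mpr ⟨m, rfl⟩
    have : (x : Fin n → ℝ) = (N : ℝ) • ∑ i, (m i : ℝ) • c i := by
      rw [hK x, Finset.smul_sum]
      congr 1; funext i
      rw [hm i, smul_smul]
      push_cast
      ring_nf
    rw [AddSubgroup.mem_addSubgroupOf, this]
    exact hmul _ hy
  have h1 : (H.addSubgroupOf Λ).index ∣ f.ker.index := AddSubgroup.index_dvd_of_le hker
  have h2 : f.ker.index ≠ 0 := by
    rw [AddSubgroup.index_ker]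
    haveI : Finite ↥f.range := Subtype.finite
    rw [Nat.card_ne_zero]
    exact ⟨⟨0, ⟨0, map_zero f⟩⟩, inferInstance⟩
  exact fun h => h2 (Nat.eq_zero_of_zero_dvd (h ▸ h1))

lemma basis_mem {Γ : AddSubgroup (Fin n → ℝ)} {b : Fin n → (Fin n → ℝ)}
    (hΓ : ∀ x, x ∈ Γ ↔ ∃ c : Fin n → ℤ, x = ∑ i, (c i : ℝ) • b i) (i : Fin n) : b i ∈ Γ := by
  refine (hΓ _).mpr ⟨Pi.single i 1, ?_⟩
  simp [Pi.single_apply, ite_smul]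

lemma refl_denom {Γ : AddSubgroup (Fin n → ℝ)} {b : Fin n → (Fin n → ℝ)}
    (hΓ : ∀ x, x ∈ Γ ↔ ∃ c : Fin n → ℤ, x = ∑ i, (c i : ℝ) • b i)
    (hrat : ∀ γ ∈ Γ, ∀ γ' ∈ Γ, ∃ q : ℚ, dotProduct γ γ' = (q : ℝ))
    {v : Fin n → ℝ} (hv : v ∈ Γ) (hv0 : v ≠ 0) :
    ∃ N : ℕ, N ≠ 0 ∧ ∀ x ∈ Γ, (N : ℝ) • ((reflMatrix v) *ᵥ x) ∈ Γ := by
  obtain ⟨q₀, hq₀⟩ := hrat v hv v hv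
  have hq₀0 : q₀ ≠ 0 := by
    intro h
    apply hv0
    apply dotProduct_self_eq_zero.mp
    rw [hq₀, h]; simp
  have hq : ∀ i, ∃ q : ℚ, v ⬝ᵥ b i = (q : ℝ) := fun i => hrat v hv (b i) (basis_mem hΓ i)
  choose q hqs using hq
  set r : Fin n → ℚ := fun i => 2 * q i / q₀ with hr
  set N : ℕ := ∏ i, (r i).den with hNdef
  have hN : N ≠ 0 := Finset.prod_ne_zero_iff.mpr fun i _ => (r i).den_nz
  have hz : ∀ i, ∃ z : ℤ, (N : ℚ) * r i = (z : ℚ) := by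
    intro i
    have hdvd : ((r i).den : ℤ) ∣ (N : ℤ) :=
      Int.natCast_dvd_natCast.mpr (Finset.dvd_prod_of_mem _ (Finset.mem_univ i))
    obtain ⟨t, ht⟩ := hdvd
    refine ⟨(r i).num * t, ?_⟩
    have hden : ((r i).den : ℚ) * r i = (r i).num := by
      rw [mul_comm]; exact_mod_cast Rat.mul_den_eq_num (r i)
    have htq : (N : ℚ) = ((r i).den : ℚ) * (t : ℚ) := by exact_mod_cast ht
    push_cast
    linear_combination r i * htq + (t : ℚ) * hden
  choose z hzs using hz
  refine ⟨N, hN, ?_⟩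
  intro x hx
  obtain ⟨k, hk⟩ := (hΓ x).mp hx
  have hdot : v ⬝ᵥ x = ((∑ i, (k i : ℚ) * q i : ℚ) : ℝ) := by
    rw [hk]
    have : v ⬝ᵥ (∑ i, (k i : ℝ) • b i) = ∑ i, (k i : ℝ) * (v ⬝ᵥ b i) := by
      simp only [dotProduct, Finset.sum_apply, Pi.smul_apply, smul_eq_mul, Finset.mul_sum]
      rw [Finset.sum_comm]
      exact Finset.sum_congr rfl fun i _ => Finset.sum_congr rfl fun j _ => by ring
    rw [this]
    push_cast
    exact Finset.sum_congr rfl fun i _ => by rw [hqs i]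
  set Z : ℤ := ∑ i, k i * z i with hZ
  have hcoef : (N : ℝ) * (2 / (v ⬝ᵥ v) * (v ⬝ᵥ x)) = (Z : ℝ) := by
    rw [hq₀, hdot]
    have key : (N : ℚ) * (2 / q₀ * (∑ i, (k i : ℚ) * q i)) = (Z : ℚ) := by
      rw [hZ, Finset.mul_sum]
      push_cast
      rw [Finset.mul_sum]
      refine Finset.sum_congr rfl fun i _ => ?_
      have := hzs i
      rw [hr] at this
      simp only at this
      calc (N : ℚ) * (2 / q₀ * ((k i : ℚ) * q i)) = (k i : ℚ) * ((N : ℚ) * (2 * q i / q₀)) := by ring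
        _ = (k i : ℚ) * (z i : ℚ) := by rw [this]
    exact_mod_cast key
  rw [reflMatrix_mulVec, smul_sub, smul_smul, hcoef]
  have h1 : (N : ℝ) • x ∈ Γ := by
    have := AddSubgroup.nsmul_mem Γ hx N
    rwa [← Nat.cast_smul_eq_nsmul ℝ] at this
  have h2 : (Z : ℝ) • v ∈ Γ := by
    have := AddSubgroup.zsmul_mem Γ hv Z
    rwa [← Int.cast_smul_eq_zsmul ℝ] at this
  exact AddSubgroup.sub_mem Γ h1 h2

lemma mulVec_sum' (A : Matrix (Fin n) (Fin n) ℝ) (f : Fin n → (Fin n → ℝ)) (c : Fin n → ℝ) :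
    A *ᵥ (∑ i, c i • f i) = ∑ i, c i • (A *ᵥ f i) := by
  simp only [← Matrix.mulVecLin_apply, map_sum, LinearMap.map_smul]

lemma mem_map_iff {Γ : AddSubgroup (Fin n → ℝ)} (A : Matrix (Fin n) (Fin n) ℝ) (x : Fin n → ℝ) :
    x ∈ Γ.map A.mulVecLin.toAddMonoidHom ↔ ∃ y ∈ Γ, A *ᵥ y = x := by
  simp [AddSubgroup.mem_map, Matrix.mulVecLin_apply]

lemma refl_coincidence {Γ : AddSubgroup (Fin n → ℝ)} {b : Fin n → (Fin n → ℝ)}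
    (hb₁ : LinearIndependent ℝ b)
    (hΓ : ∀ x, x ∈ Γ ↔ ∃ c : Fin n → ℤ, x = ∑ i, (c i : ℝ) • b i)
    (hrat : ∀ γ ∈ Γ, ∀ γ' ∈ Γ, ∃ q : ℚ, dotProduct γ γ' = (q : ℝ))
    {v : Fin n → ℝ} (hv : v ∈ Γ) (hv0 : v ≠ 0) :
    IsCoincidenceIsometry Γ (reflMatrix v) := by
  obtain ⟨N, hN, hD⟩ := refl_denom hΓ hrat hv hv0
  set ρ := reflMatrix v with hρ
  set ρΓ := Γ.map ρ.mulVecLin.toAddMonoidHom with hρΓ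
  set H := Γ ⊓ ρΓ with hH
  have hmulΓ : ∀ x ∈ Γ, (N : ℝ) • x ∈ H := by
    intro x hx
    refine AddSubgroup.mem_inf.mpr ⟨?_, ?_⟩
    · have := AddSubgroup.nsmul_mem Γ hx N
      rwa [← Nat.cast_smul_eq_nsmul ℝ] at this
    · rw [hρΓ, mem_map_iff]
      exact ⟨(N : ℝ) • (ρ *ᵥ x), hD x hx, by
        rw [mulVec_smul, reflMatrix_involutive hv0]⟩
  have hmulρ : ∀ x ∈ ρΓ, (N : ℝ) • x ∈ H := by
    intro x hx
    obtain ⟨y, hy, hyx⟩ := (mem_map_iff _ _).mp hx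
    refine AddSubgroup.mem_inf.mpr ⟨?_, ?_⟩
    · rw [← hyx]
      exact hD _ hy
    · have := AddSubgroup.nsmul_mem ρΓ hx N
      rwa [← Nat.cast_smul_eq_nsmul ℝ] at this
  have hΛ : ∀ x, x ∈ ρΓ ↔ ∃ k : Fin n → ℤ, x = ∑ i, (k i : ℝ) • (ρ *ᵥ b i) := by
    intro x
    constructor
    · rintro hx
      obtain ⟨y, hy, rfl⟩ := (mem_map_iff _ _).mp hx
      obtain ⟨k, rfl⟩ := (hΓ y).mp hy
      exact ⟨k, by rw [mulVec_sum']⟩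
    · rintro ⟨k, rfl⟩
      rw [mem_map_iff]
      exact ⟨∑ i, (k i : ℝ) • b i, (hΓ _).mpr ⟨k, rfl⟩, by rw [mulVec_sum']⟩
  have hinj : Function.Injective ρ.mulVecLin := by
    intro a c hac
    have : ρ *ᵥ a = ρ *ᵥ c := hac
    have := congrArg (ρ *ᵥ ·) this
    simpa [hρ, reflMatrix_involutive hv0, -Matrix.mulVec_mulVec] using this
  have hc : LinearIndependent ℝ (fun i => ρ *ᵥ b i) := by
    have := hb₁.map' ρ.mulVecLin (LinearMap.ker_eq_bot.mpr hinj)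
    exact this
  refine ⟨reflMatrix_mem_O hv0, ?_, ?_⟩
  · have hidx := index_ne_zero_of_nsmul_le hb₁ hΓ hN hmulΓ
    have hle : H.addSubgroupOf Γ ≤ ρΓ.addSubgroupOf Γ := by
      intro x hx
      rw [AddSubgroup.mem_addSubgroupOf] at *
      exact hx.2
    exact fun h => hidx (Nat.eq_zero_of_zero_dvd (h ▸ AddSubgroup.index_dvd_of_le hle))
  · have hidx := index_ne_zero_of_nsmul_le hc hΛ hN hmulρ
    have hle : H.addSubgroupOf ρΓ ≤ Γ.addSubgroupOf ρΓ := by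
      intro x hx
      rw [AddSubgroup.mem_addSubgroupOf] at *
      exact hx.1
    exact fun h => hidx (Nat.eq_zero_of_zero_dvd (h ▸ AddSubgroup.index_dvd_of_le hle))

noncomputable def fixSpace (Q : Matrix (Fin n) (Fin n) ℝ) : Submodule ℝ (Fin n → ℝ) :=
  LinearMap.ker (Q.mulVecLin - LinearMap.id)

lemma mem_fixSpace {Q : Matrix (Fin n) (Fin n) ℝ} {x : Fin n → ℝ} : x ∈ fixSpace Q ↔ Q *ᵥ x = x := by
  unfold fixSpace
  rw [LinearMap.mem_ker, LinearMap.sub_apply, LinearMap.id_apply, sub_eq_zero,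
    Matrix.mulVecLin_apply]

lemma cartan {Γ : AddSubgroup (Fin n → ℝ)} {b : Fin n → (Fin n → ℝ)}
    (hb₂ : Submodule.span ℝ (Set.range b) = ⊤)
    (hΓ : ∀ x, x ∈ Γ ↔ ∃ c : Fin n → ℤ, x = ∑ i, (c i : ℝ) • b i)
    (hrat : ∀ γ ∈ Γ, ∀ γ' ∈ Γ, ∃ q : ℚ, dotProduct γ γ' = (q : ℝ)) :
    ∀ d : ℕ, ∀ Q : Matrix (Fin n) (Fin n) ℝ, Q ∈ Matrix.orthogonalGroup (Fin n) ℝ →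
    (∃ M : ℕ, M ≠ 0 ∧ ∀ γ ∈ Γ, (M : ℝ) • (Q *ᵥ γ) ∈ Γ) →
    n ≤ d + Module.finrank ℝ (fixSpace Q) →
    ∃ k : ℕ, k ≤ d ∧ ∃ g : Fin k → (Fin n → ℝ), (∀ i, g i ∈ Γ ∧ g i ≠ 0) ∧
      Q = (List.ofFn fun i => reflMatrix (g i)).prod := by
  intro d
  induction d with
  | zero =>
    intro Q hQO _ hrank
    -- fixSpace Q = ⊤, so Q = 1
    have hfr : Module.finrank ℝ (fixSpace Q) = n := by
      have h1 : Module.finrank ℝ (fixSpace Q) ≤ n := by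
        have := Submodule.finrank_le (fixSpace Q)
        simpa [Module.finrank_fin_fun] using this
      omega
    have htop : fixSpace Q = ⊤ := by
      apply Submodule.eq_top_of_finrank_eq
      rw [hfr, Module.finrank_fin_fun]
    have hQ1 : Q = 1 := by
      apply matrix_ext_mulVec
      intro x
      rw [one_mulVec]
      exact mem_fixSpace.mp (htop ▸ Submodule.mem_top)
    exact ⟨0, le_refl 0, fun i => i.elim0, fun i => i.elim0, by
      simp [hQ1, List.ofFn_zero]⟩
  | succ e ih =>
    intro Q hQO hM hrank
    by_cases hQ1 : ∀ x, Q *ᵥ x = x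
    · have : Q = 1 := matrix_ext_mulVec (fun x => by rw [one_mulVec]; exact hQ1 x)
      exact ⟨0, Nat.zero_le _, fun i => i.elim0, fun i => i.elim0, by
        simp [this, List.ofFn_zero]⟩
    · -- there is a lattice vector moved by Q
      have hγex : ∃ γ ∈ Γ, Q *ᵥ γ ≠ γ := by
        by_contra hc
        push_neg at hc
        apply hQ1
        have hlin : Q.mulVecLin = LinearMap.id := by
          apply LinearMap.ext_on hb₂
          rintro x ⟨i, rfl⟩
          exact hc (b i) (basis_mem hΓ i)
        intro x
        have := LinearMap.congr_fun hlin x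
        simpa [Matrix.mulVecLin_apply] using this
      obtain ⟨γ, hγΓ, hne⟩ := hγex
      obtain ⟨M, hMne0, hMΓ⟩ := hM
      have hMne : (M : ℝ) ≠ 0 := Nat.cast_ne_zero.mpr hMne0
      set w := Q *ᵥ γ with hw
      have hwΓ : (M : ℝ) • w ∈ Γ := hMΓ γ hγΓ
      set v := (M : ℝ) • γ - (M : ℝ) • w with hvdef
      have hγM : (M : ℝ) • γ ∈ Γ := by
        have := AddSubgroup.nsmul_mem Γ hγΓ M
        rwa [← Nat.cast_smul_eq_nsmul ℝ] at this
      have hvΓ : v ∈ Γ := AddSubgroup.sub_mem Γ hγM hwΓ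
      have hv0 : v ≠ 0 := by
        rw [hvdef, ← smul_sub]
        exact smul_ne_zero hMne (sub_ne_zero.mpr (Ne.symm hne))
      set R := reflMatrix v with hR
      -- dot product computations
      have haw : w ⬝ᵥ w = γ ⬝ᵥ γ := orth_dot hQO γ γ
      have hvw : v ⬝ᵥ w = (M : ℝ) * (γ ⬝ᵥ w) - (M : ℝ) * (γ ⬝ᵥ γ) := by
        rw [hvdef, sub_dotProduct, smul_dotProduct, smul_dotProduct, haw]
        simp [smul_eq_mul]
      have hvv : v ⬝ᵥ v = 2 * (M : ℝ)^2 * (γ ⬝ᵥ γ - γ ⬝ᵥ w) := by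
        rw [hvdef]
        simp only [sub_dotProduct, dotProduct_sub, smul_dotProduct, dotProduct_smul,
          smul_eq_mul, haw]
        rw [dotProduct_comm w γ]
        ring
      have hvv0 : v ⬝ᵥ v ≠ 0 := dot_ne_zero hv0
      have ht : γ ⬝ᵥ γ - γ ⬝ᵥ w ≠ 0 := by
        intro h
        apply hvv0
        rw [hvv, h, mul_zero]
      have hc : 2 / (v ⬝ᵥ v) * (v ⬝ᵥ w) = -(1 / (M : ℝ)) := by
        rw [hvv, hvw]
        field_simp
        ring
      have hRw : R *ᵥ w = γ := by
        rw [hR, reflMatrix_mulVec, hc, hvdef]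
        match_scalars <;> field_simp <;> ring
      have hRfix : ∀ x, Q *ᵥ x = x → R *ᵥ x = x := by
        intro x hx
        have h1 : w ⬝ᵥ x = γ ⬝ᵥ x := by
          calc w ⬝ᵥ x = (Q *ᵥ γ) ⬝ᵥ (Q *ᵥ x) := by rw [hx]
            _ = γ ⬝ᵥ x := orth_dot hQO γ x
        have hvx : v ⬝ᵥ x = 0 := by
          rw [hvdef, sub_dotProduct, smul_dotProduct, smul_dotProduct, h1]
          simp
        rw [hR, reflMatrix_mulVec, hvx, mul_zero, zero_smul, sub_zero]
      set Q' := R * Q with hQ'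
      have hQ'O : Q' ∈ Matrix.orthogonalGroup (Fin n) ℝ :=
        mul_mem (reflMatrix_mem_O hv0) hQO
      have hQ'γ : Q' *ᵥ γ = γ := by
        rw [hQ', ← mulVec_mulVec, ← hw, hRw]
      have hfixle : fixSpace Q ≤ fixSpace Q' := by
        intro x hx
        rw [mem_fixSpace] at *
        rw [hQ', ← mulVec_mulVec, hx]
        exact hRfix x hx
      have hlt : fixSpace Q < fixSpace Q' := by
        refine lt_of_le_of_ne hfixle fun h => ?_
        exact hne (mem_fixSpace.mp (h.symm ▸ mem_fixSpace.mpr hQ'γ))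
      have hrank' : Module.finrank ℝ (fixSpace Q) < Module.finrank ℝ (fixSpace Q') :=
        Submodule.finrank_lt_finrank_of_lt hlt
      obtain ⟨N, hNne, hD⟩ := refl_denom hΓ hrat hvΓ hv0
      have hmul' : ∀ γ' ∈ Γ, ((N * M : ℕ) : ℝ) • (Q' *ᵥ γ') ∈ Γ := by
        intro γ' hγ'
        have h2 := hD _ (hMΓ γ' hγ')
        have heq : ((N * M : ℕ) : ℝ) • (Q' *ᵥ γ') = (N : ℝ) • (reflMatrix v *ᵥ ((M : ℝ) • (Q *ᵥ γ'))) := by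
          rw [mulVec_smul, hQ', ← mulVec_mulVec, smul_smul]
          push_cast
          rfl
        rw [heq]
        exact h2
      obtain ⟨k, hk, g, hg, hprod⟩ := ih Q' hQ'O ⟨N * M, Nat.mul_ne_zero hNne hMne0, hmul'⟩
        (by omega)
      refine ⟨k + 1, by omega, Fin.cons v g, ?_, ?_⟩
      · intro i
        refine Fin.cases ?_ ?_ i
        · exact ⟨hvΓ, hv0⟩
        · intro j
          simpa [Fin.cons_succ] using hg j
      · have : (List.ofFn fun i : Fin (k+1) => reflMatrix ((Fin.cons v g : Fin (k+1) → Fin n → ℝ) i)).prod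
            = reflMatrix v * (List.ofFn fun i : Fin k => reflMatrix (g i)).prod := by
          rw [List.ofFn_succ]
          simp [Fin.cons_succ, Fin.cons_zero]
        rw [this, ← hprod, hQ', ← mul_assoc, reflMatrix_mul_self hv0, one_mul]


theorem stmt19 {n : ℕ} (Γ : AddSubgroup (Fin n → ℝ)) (b : Fin n → (Fin n → ℝ))
    (hb₁ : LinearIndependent ℝ b) (hb₂ : Submodule.span ℝ (Set.range b) = ⊤)
    (hΓ : ∀ x, x ∈ Γ ↔ ∃ c : Fin n → ℤ, x = ∑ i, (c i : ℝ) • b i)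
    (hrat : ∀ γ ∈ Γ, ∀ γ' ∈ Γ, ∃ q : ℚ, dotProduct γ γ' = (q : ℝ)) :
    ∀ Q : Matrix (Fin n) (Fin n) ℝ, IsCoincidenceIsometry Γ Q →
      ∃ k : ℕ, k ≤ n ∧ ∃ g : Fin k → (Fin n → ℝ), (∀ i, g i ∈ Γ ∧ g i ≠ 0) ∧
        (∀ i, IsCoincidenceIsometry Γ (reflMatrix (g i))) ∧
        Q = (List.ofFn fun i => reflMatrix (g i)).prod := by
  intro Q hQ
  obtain ⟨hQO, hcomm⟩ := hQ
  set QΓ := Γ.map Q.mulVecLin.toAddMonoidHom with hQΓdef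
  have hidx2 : (Γ.addSubgroupOf QΓ).index ≠ 0 := hcomm.2
  have hM : ∀ γ ∈ Γ, (((Γ.addSubgroupOf QΓ).index : ℕ) : ℝ) • (Q *ᵥ γ) ∈ Γ := by
    intro γ hγ
    have hQγ : Q *ᵥ γ ∈ QΓ := (mem_map_iff Q _).mpr ⟨γ, hγ, rfl⟩
    have hmem := AddSubgroup.nsmul_index_mem (Γ.addSubgroupOf QΓ) (⟨Q *ᵥ γ, hQγ⟩ : QΓ)
    rw [AddSubgroup.mem_addSubgroupOf] at hmem
    have hcoe : ((((Γ.addSubgroupOf QΓ).index • (⟨Q *ᵥ γ, hQγ⟩ : QΓ)) : QΓ) : Fin n → ℝ)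
        = (Γ.addSubgroupOf QΓ).index • (Q *ᵥ γ) := by
      simp
    rw [hcoe] at hmem
    rwa [Nat.cast_smul_eq_nsmul ℝ]
  obtain ⟨k, hk, g, hg, hprod⟩ := cartan hb₂ hΓ hrat n Q hQO
    ⟨(Γ.addSubgroupOf QΓ).index, hidx2, hM⟩ (Nat.le_add_right _ _)
  exact ⟨k, hk, g, hg, fun i => refl_coincidence hb₁ hΓ hrat (hg i).1 (hg i).2, hprod⟩
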